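/- arXiv:1612.03634 — 3 statements merged into one kernel-verified Lean document; each statement's English description precedes it below -/
import Mathlib

section
/- An abelian category C has homological dimension at most n (i.e., Ext^{n+1}_C(X,Y) = 0 for all X, Y) if and only if for every object X of C, the functor Ext^n_C(X, -) is right exact. -/
open CategoryTheory CategoryTheory.Abelian CategoryTheory.Limits DerivedCategory

universe w' w v u

section Aux

variable {C : Type u} [Category.{v} C] [Abelian C]

private lemma aux_key1 [HasDerivedCategory.{w'} C] (j : ℤ) (hj : j ≠ 0) {X Y : C}
    (ψ : DerivedCategory.Q.obj ((CochainComplex.singleFunctor C 0).obj X) ⟶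
      DerivedCategory.Q.obj ((CochainComplex.singleFunctor C j).obj Y)) :
    ∃ (B : C) (g : Y ⟶ B), Mono g ∧
      ψ ≫ DerivedCategory.Q.map ((CochainComplex.singleFunctor C j).map g) = 0 := by
  have hW : (HomotopyCategory.quasiIso C (ComplexShape.up ℤ)).HasLeftCalculusOfFractions := by
    rw [HomotopyCategory.quasiIso_eq_subcategoryAcyclic_W]
    infer_instance
  obtain ⟨φ, hφ⟩ := Localization.exists_leftFraction Qh
    (HomotopyCategory.quasiIso C (ComplexShape.up ℤ))
    (show Qh.obj ((HomotopyCategory.quotient C (ComplexShape.up ℤ)).obj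
        ((CochainComplex.singleFunctor C 0).obj X)) ⟶
      Qh.obj ((HomotopyCategory.quotient C (ComplexShape.up ℤ)).obj
        ((CochainComplex.singleFunctor C j).obj Y)) from ψ)
  set L : CochainComplex C ℤ := φ.Y'.as with hL
  obtain ⟨f₀, hf₀⟩ := (HomotopyCategory.quotient C (ComplexShape.up ℤ)).map_surjective
    (show (HomotopyCategory.quotient C (ComplexShape.up ℤ)).obj
        ((CochainComplex.singleFunctor C 0).obj X) ⟶
      (HomotopyCategory.quotient C (ComplexShape.up ℤ)).obj L from φ.f)
  obtain ⟨s₀, hs₀⟩ := (HomotopyCategory.quotient C (ComplexShape.up ℤ)).map_surjective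
    (show (HomotopyCategory.quotient C (ComplexShape.up ℤ)).obj
        ((CochainComplex.singleFunctor C j).obj Y) ⟶
      (HomotopyCategory.quotient C (ComplexShape.up ℤ)).obj L from φ.s)
  dsimp only at hφ hf₀ hs₀
  have hqs : QuasiIso s₀ := by
    have h' := φ.hs
    rw [← hs₀] at h'
    exact (HomotopyCategory.quotient_map_mem_quasiIso_iff s₀).1 h'
  set B : C := L.opcycles j with hB
  set q : L ⟶ (HomologicalComplex.single C (ComplexShape.up ℤ) j).obj B :=
    HomologicalComplex.mkHomToSingle (L.pOpcycles j) (fun i _ => L.d_pOpcycles i j) with hq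
  set g : Y ⟶ B := (HomologicalComplex.singleObjXSelf (ComplexShape.up ℤ) j Y).inv ≫
    s₀.f j ≫ L.pOpcycles j with hg
  have hfac : s₀ ≫ q = (CochainComplex.singleFunctor C j).map g := by
    show s₀ ≫ q = (HomologicalComplex.single C (ComplexShape.up ℤ) j).map g
    apply HomologicalComplex.hom_ext
    intro i
    by_cases hi : i = j
    · subst hi
      simp [hq, hg, HomologicalComplex.single_map_f_self]
      exact (Category.assoc _ _ _).symm
    · apply (HomologicalComplex.isZero_single_obj_X (ComplexShape.up ℤ) j B i hi).eq_of_tgt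
  have hzero : f₀ ≫ q = 0 := by
    apply HomologicalComplex.hom_ext
    intro i
    by_cases hi : i = 0
    · subst hi
      apply (HomologicalComplex.isZero_single_obj_X (ComplexShape.up ℤ) j B 0
        (fun h => hj h.symm)).eq_of_tgt
    · apply ((HomologicalComplex.isZero_single_obj_X (ComplexShape.up ℤ) 0 X i hi).eq_of_src)
  have hmap : ∀ (K K' : CochainComplex C ℤ) (u : K ⟶ K'),
      Qh.map ((HomotopyCategory.quotient C (ComplexShape.up ℤ)).map u) =
        DerivedCategory.Q.map u := by
    intro K K' u
    exact CategoryTheory.Quotient.lift_map_functor_map _ HomologicalComplexUpToQuasiIso.Q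
      (fun K L f g ⟨h⟩ => HomologicalComplexUpToQuasiIso.Q_map_eq_of_homotopy h) u
  refine ⟨B, g, ?_, ?_⟩
  · have h1 : s₀.f j ≫ L.pOpcycles j =
        HomologicalComplex.pOpcycles _ j ≫ HomologicalComplex.opcyclesMap s₀ j :=
      (HomologicalComplex.p_opcyclesMap s₀ j).symm
    haveI : IsIso (HomologicalComplex.pOpcycles
        ((CochainComplex.singleFunctor C j).obj Y) j) :=
      HomologicalComplex.isIso_pOpcycles _ (j-1) j (by simp) (by
        apply HomologicalComplex.single_obj_d)
    haveI : IsIso (HomologicalComplex.homologyι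
        ((CochainComplex.singleFunctor C j).obj Y) j) :=
      HomologicalComplex.isIso_homologyι _ j (j+1) (by simp) (by
        apply HomologicalComplex.single_obj_d)
    haveI : IsIso (HomologicalComplex.homologyMap s₀ j) := by
      have := hqs.1 j
      rw [quasiIsoAt_iff_isIso_homologyMap] at this
      exact this
    have h2 : HomologicalComplex.opcyclesMap s₀ j =
        inv (HomologicalComplex.homologyι _ j) ≫ HomologicalComplex.homologyMap s₀ j ≫
          HomologicalComplex.homologyι L j := by
      rw [HomologicalComplex.homologyι_naturality, IsIso.inv_hom_id_assoc]
    haveI : Mono (HomologicalComplex.opcyclesMap s₀ j) := by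
      rw [h2]; infer_instance
    rw [hg]
    erw [h1]
    exact @mono_comp _ _ _ _ _ _ inferInstance _ (@mono_comp _ _ _ _ _ _ (@IsIso.mono_of_iso _ _ _ _ _ (HomologicalComplex.isIso_pOpcycles _ (j-1) j (by simp) (by
        apply HomologicalComplex.single_obj_d))) _ inferInstance)
  · rw [hφ]
    have e1 : DerivedCategory.Q.map ((CochainComplex.singleFunctor C j).map g) =
        DerivedCategory.Q.map s₀ ≫ DerivedCategory.Q.map q := by
      rw [← Functor.map_comp, hfac]
      rfl
    rw [e1, ← hmap _ _ s₀, hs₀]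
    erw [MorphismProperty.LeftFraction.map_comp_map_s_assoc]
    rw [← hf₀]
    erw [hmap]
    erw [← Functor.map_comp]
    rw [hzero, Functor.map_zero]
    rfl

private lemma aux_key2 [HasExt.{w} C] {X Y : C} (n : ℕ) (e : Ext X Y (n+1)) :
    ∃ (B : C) (g : Y ⟶ B), Mono g ∧ e.comp (Ext.mk₀ g) (add_zero _) = 0 := by
  letI := HasDerivedCategory.standard C
  have hQmap : ∀ (k : ℤ) {A A' : C} (u : A ⟶ A'),
      (DerivedCategory.singleFunctor C k).map u =
        DerivedCategory.Q.map ((CochainComplex.singleFunctor C k).map u) := by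
    intro k A A' u
    have h := ((DerivedCategory.singleFunctorsPostcompQIso C).hom.hom k).naturality u
    rw [DerivedCategory.singleFunctorsPostcompQIso_hom_hom] at h
    simp at h
    exact h
  set j : ℤ := -((n+1 : ℕ) : ℤ) with hjdef
  let σ : DerivedCategory.singleFunctor C 0 ⋙
        shiftFunctor (DerivedCategory C) ((n+1 : ℕ) : ℤ) ≅ DerivedCategory.singleFunctor C j :=
    (DerivedCategory.singleFunctors C).shiftIso ((n+1 : ℕ) : ℤ) j 0 (by omega)
  obtain ⟨B, g, hmono, hz⟩ := aux_key1 j (by omega)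
    (show DerivedCategory.Q.obj ((CochainComplex.singleFunctor C 0).obj X) ⟶
        DerivedCategory.Q.obj ((CochainComplex.singleFunctor C j).obj Y) from
      e.hom ≫ σ.hom.app Y)
  dsimp only at hz
  refine ⟨B, g, hmono, ?_⟩
  apply Ext.ext
  rw [Ext.zero_hom, ← Ext.hom_comp_singleFunctor_map_shift]
  have hnat := σ.hom.naturality g
  dsimp only [Functor.comp_map] at hnat
  rw [← cancel_mono (σ.hom.app B), zero_comp, Category.assoc, hnat,
    ← Category.assoc]
  rw [hQmap] at *
  exact hz

end Aux

/-- An abelian category `C` has homological dimension at most `n`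
(i.e. `Ext^{n+1}(X,Y) = 0` for all `X`, `Y`) if and only if for every object `X`,
the covariant functor `Ext^n(X, -)` is right exact, i.e. for every short exact
sequence `0 → A → B → C → 0` the induced sequence
`Ext^n(X,A) → Ext^n(X,B) → Ext^n(X,C) → 0` is exact. -/
theorem homological_dimension_le_iff_ext_right_exact
    {C : Type u} [Category.{v} C] [Abelian C] [HasExt.{w} C] (n : ℕ) :
    (∀ X Y : C, Subsingleton (Ext X Y (n + 1))) ↔
      (∀ (X : C) (S : ShortComplex C), S.ShortExact →
        (Function.Exact
            (fun e : Ext X S.X₁ n => e.comp (Ext.mk₀ S.f) (add_zero n))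
            (fun e : Ext X S.X₂ n => e.comp (Ext.mk₀ S.g) (add_zero n)) ∧
          Function.Surjective
            (fun e : Ext X S.X₂ n => e.comp (Ext.mk₀ S.g) (add_zero n)))) := by
  constructor
  · intro h X S hS
    constructor
    · intro y
      constructor
      · intro hy
        obtain ⟨x, hx⟩ := Ext.covariant_sequence_exact₂ X hS y hy
        exact ⟨x, hx⟩
      · rintro ⟨x, rfl⟩
        simp only [Ext.comp_assoc_of_third_deg_zero, Ext.mk₀_comp_mk₀, S.zero,
          Ext.mk₀_zero, Ext.comp_zero]
    · intro x₃
      have hx₃ : x₃.comp hS.extClass rfl = 0 := Subsingleton.elim _ _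
      obtain ⟨x₂, hx₂⟩ := Ext.covariant_sequence_exact₃ X hS x₃ rfl hx₃
      exact ⟨x₂, hx₂⟩
  · intro h X Y
    constructor
    intro a b
    suffices hzero : ∀ (e : Ext X Y (n+1)), e = 0 by rw [hzero a, hzero b]
    intro e
    obtain ⟨B, g, hmono, hg⟩ := aux_key2 n e
    haveI := hmono
    let S : ShortComplex C := ShortComplex.mk g (cokernel.π g) (by simp)
    have hS : S.ShortExact := by
      refine ⟨S.exact_of_g_is_cokernel (cokernelIsCokernel g)⟩
    obtain ⟨x₃, hx₃⟩ := Ext.covariant_sequence_exact₁ X hS e hg rfl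
    obtain ⟨hex, hsurj⟩ := h X S hS
    obtain ⟨x₂, hx₂⟩ := hsurj x₃
    rw [← hx₃, ← hx₂, Ext.comp_assoc_of_second_deg_zero, hS.comp_extClass, Ext.comp_zero]
end

section
/- In the category F̃ of triples (X, Y, η) with X in a semi-simple abelian category X̃, Y in a semi-simple abelian category Y, and η ∈ Hom_{X̃}(F(Y), X) for a fixed exact functor F : Y → X̃, an object Z = (X, Y, η) is projective if and only if η is a monomorphism; in that case Z ≅ X' × E(Y) for some subobject X' of X, where E(Y) = (F(Y), Y, id). -/
open CategoryTheory CategoryTheory.Limits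

universe v₁ v₂ u₁ u₂

variable {A : Type u₁} [Category.{v₁} A] [Abelian A]
variable {B : Type u₂} [Category.{v₂} B] [Abelian B]
variable (F : B ⥤ A)

/-- An abelian category is semi-simple when every short exact sequence splits. -/
def IsSemisimpleCat (D : Type*) [Category D] [Abelian D] : Prop :=
  ∀ S : ShortComplex D, S.ShortExact → Nonempty S.Splitting

/-- In a semisimple abelian category every epimorphism has a section. -/
lemma IsSemisimpleCat.exists_section {D : Type*} [Category D] [Abelian D]
    (h : IsSemisimpleCat D) {M N : D} (g : M ⟶ N) [Epi g] :
    ∃ s : N ⟶ M, s ≫ g = 𝟙 N := by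
  obtain ⟨σ⟩ := h (ShortComplex.mk (kernel.ι g) g (kernel.condition g))
    (ShortComplex.ShortExact.mk'
      (ShortComplex.exact_of_f_is_kernel _ (kernelIsKernel g)) inferInstance inferInstance)
  exact ⟨σ.s, σ.s_g⟩

/-- In the comma category, the components of an epimorphism are epimorphisms. -/
lemma comma_epi_components [F.Additive] [PreservesFiniteColimits F]
    {W Q : Comma F (𝟭 A)} (e : W ⟶ Q) [Epi e] : Epi e.left ∧ Epi e.right := by
  have hker : F.map e.left ≫ Q.hom ≫ cokernel.π e.right = 0 := by
    rw [← Category.assoc, e.w]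
    simp
  let Coker : Comma F (𝟭 A) := Comma.mk (L := F) (R := 𝟭 A)
    (left := cokernel e.left) (right := cokernel e.right)
    (hom := inv (cokernelComparison e.left F) ≫
      cokernel.desc (F.map e.left) (Q.hom ≫ cokernel.π e.right) hker)
  let q : Q ⟶ Coker :=
    { left := cokernel.π e.left
      right := cokernel.π e.right
      w := by
        show F.map (cokernel.π e.left) ≫ _ ≫ _ = _
        rw [← π_comp_cokernelComparison e.left F, Category.assoc, IsIso.hom_inv_id_assoc,
          cokernel.π_desc]
        simp }
  let q₀ : Q ⟶ Coker :=
    { left := 0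
      right := 0
      w := by simp }
  have heq : e ≫ q = e ≫ q₀ := by
    apply CommaMorphism.ext <;> simp [q, q₀, cokernel.condition]
  have hq : q = q₀ := (cancel_epi e).mp heq
  constructor
  · exact CategoryTheory.Abelian.epi_of_cokernel_π_eq_zero _
      (congrArg CommaMorphism.left hq)
  · exact CategoryTheory.Abelian.epi_of_cokernel_π_eq_zero _
      (congrArg CommaMorphism.right hq)

/-- Objects of the form `(X' ⊞ F(Y), Y, biprod.inr)` are projective in the comma category. -/
lemma inr_projective [F.Additive] [PreservesFiniteColimits F]
    (hA : IsSemisimpleCat A) (hB : IsSemisimpleCat B) (X' : A) (Y : B) :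
    Projective (Comma.mk (L := F) (R := 𝟭 A)
      (left := Y) (right := X' ⊞ F.obj Y) (hom := biprod.inr)) := by
  constructor
  intro Q W f e he
  obtain ⟨hl, hr⟩ := comma_epi_components F e
  obtain ⟨sB, hsB⟩ := hB.exists_section e.left
  obtain ⟨sA, hsA⟩ := hA.exists_section e.right
  refine ⟨{ left := f.left ≫ sB,
            right := biprod.desc ((biprod.inl ≫ f.right) ≫ sA)
              (F.map (f.left ≫ sB) ≫ Q.hom),
            w := by simp }, ?_⟩
  apply CommaMorphism.ext
  · show (f.left ≫ sB) ≫ e.left = f.left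
    rw [Category.assoc, hsB, Category.comp_id]
  · show biprod.desc _ _ ≫ e.right = f.right
    apply biprod.hom_ext'
    · rw [biprod.inl_desc_assoc, Category.assoc, hsA, Category.comp_id]
    · rw [biprod.inr_desc_assoc, Category.assoc]
      have hw : Q.hom ≫ e.right = F.map e.left ≫ W.hom := by
        have := e.w
        simp only [Functor.id_map] at this
        exact this.symm
      rw [hw, ← Category.assoc, ← F.map_comp, Category.assoc, hsB, Category.comp_id]
      have hfw := f.w
      dsimp only [Functor.id_map] at hfw
      exact hfw

/-- In the category `ℱ̃ = Comma F (𝟭 A)` of triples `(X, Y, η : F(Y) → X)` with `A = X̃`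
and `B = 𝒴` semi-simple abelian categories and `F` exact, an object `Z = (X, Y, η)` is
projective if and only if `η` is a monomorphism; in that case `Z ≅ X' × E(Y)` for some
subobject `X'` of `X`, where `E(Y) = (F(Y), Y, id)`, so that `X' × E(Y)` is the triple
`(X' ⊞ F(Y), Y, biprod.inr)`. -/
theorem projective_iff_mono_in_triple_category
    (hA : IsSemisimpleCat A) (hB : IsSemisimpleCat B)
    [F.Additive] [PreservesFiniteLimits F] [PreservesFiniteColimits F]
    [Abelian (Comma F (𝟭 A))]
    (Z : Comma F (𝟭 A)) :
    (Projective Z ↔ Mono Z.hom) ∧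
    (Projective Z → ∃ (X' : A) (i : X' ⟶ Z.right), Mono i ∧
      Nonempty (Z ≅ Comma.mk (L := F) (R := 𝟭 A)
        (left := Z.left) (right := X' ⊞ F.obj Z.left) (hom := biprod.inr))) := by
  -- Forward direction: Projective → Mono Z.hom
  have fwd : Projective Z → Mono Z.hom := by
    intro hp
    let PZ : Comma F (𝟭 A) := Comma.mk (L := F) (R := 𝟭 A)
      (left := Z.left) (right := Z.right ⊞ F.obj Z.left) (hom := biprod.inr)
    let p : PZ ⟶ Z :=
      { left := 𝟙 Z.left
        right := biprod.desc (𝟙 Z.right) Z.hom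
        w := by simp [PZ] }
    have hpr : Epi (biprod.desc (𝟙 Z.right) Z.hom) :=
      epi_of_epi_fac (biprod.inl_desc (𝟙 Z.right) Z.hom)
    have hpe : Epi p := by
      constructor
      intro T a b hab
      apply CommaMorphism.ext
      · have := congrArg CommaMorphism.left hab
        simpa [p, PZ] using this
      · have := congrArg CommaMorphism.right hab
        simp only [Comma.comp_right] at this
        exact (cancel_epi (biprod.desc (𝟙 Z.right) Z.hom)).mp this
    obtain ⟨s, hs⟩ := hp.factors (𝟙 Z) p
    have hsl : s.left = 𝟙 Z.left := by
      have := congrArg CommaMorphism.left hs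
      simpa [p, PZ] using this
    have hw : biprod.inr = Z.hom ≫ s.right := by
      have hsw := s.w
      dsimp only [Functor.id_map, PZ] at hsw
      rw [hsl, F.map_id, Category.id_comp] at hsw
      exact hsw
    have : Mono (Z.hom ≫ s.right) := by rw [← hw]; infer_instance
    exact mono_of_mono Z.hom s.right
  -- Backward direction: Mono Z.hom → decomposition (and projectivity)
  have key : Mono Z.hom → ∃ (X' : A) (i : X' ⟶ Z.right), Mono i ∧
      Nonempty (Z ≅ Comma.mk (L := F) (R := 𝟭 A)
        (left := Z.left) (right := X' ⊞ F.obj Z.left) (hom := biprod.inr)) := by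
    intro hm
    obtain ⟨σ⟩ := hA (ShortComplex.mk Z.hom (cokernel.π Z.hom) (cokernel.condition Z.hom))
      (ShortComplex.ShortExact.mk'
        (ShortComplex.exact_of_g_is_cokernel _ (cokernelIsCokernel Z.hom))
        hm inferInstance)
    have hsr : σ.s ≫ σ.r = 0 := by
      rw [← cancel_mono Z.hom]
      have hrf := σ.r_f
      dsimp only at hrf
      rw [Category.assoc, hrf, Preadditive.comp_sub, Category.comp_id, zero_comp,
        ← Category.assoc]
      have hsg := σ.s_g
      dsimp only at hsg
      rw [hsg, Category.id_comp, sub_self]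
    have hfr := σ.f_r
    have hgs := σ.s_g
    have hid := σ.id
    dsimp only at hfr hgs hid
    have hmono : Mono σ.s := mono_of_mono_fac hgs
    refine ⟨cokernel Z.hom, σ.s, hmono, ⟨?_⟩⟩
    refine Comma.isoMk (Iso.refl Z.left)
      { hom := biprod.lift (cokernel.π Z.hom) σ.r
        inv := biprod.desc σ.s Z.hom
        hom_inv_id := by rw [biprod.lift_desc, add_comm]; exact hid
        inv_hom_id := by
          apply biprod.hom_ext' <;> apply biprod.hom_ext <;>
            simp [hsr, hgs, hfr, cokernel.condition] } ?_
    apply biprod.hom_ext <;> simp [cokernel.condition, hfr]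
  refine ⟨⟨fwd, ?_⟩, fun hp => key (fwd hp)⟩
  intro hm
  obtain ⟨X', i, hi, ⟨e⟩⟩ := key hm
  exact Projective.of_iso e.symm (inr_projective F hA hB X' Z.left)
end

section
/- Let R be the triangular matrix ring of a ring S = R_X ⊕ R_Y with an R_X-R_Y-bimodule M (so R consists of matrices (y 0; m x)). Then the category of all left R-modules is equivalent to the category of triples (X, Y, f), where X is an R_X-module, Y is an R_Y-module, and f : M ⊗_{R_Y} Y → X is an R_X-module morphism, with morphisms pairs (u, v) making the obvious square commute. -/
open CategoryTheory

universe u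

variable (RX RY : Type u) [Ring RX] [Ring RY]
variable (M : Type u) [AddCommGroup M] [Module RX M] [Module RYᵐᵒᵖ M]
variable [SMulCommClass RX RYᵐᵒᵖ M]

/-- `M` as a left module over `S = R_X × R_Y`, acting through `R_X`. -/
noncomputable local instance moduleProdLeft : Module (RX × RY) M :=
  Module.compHom M (RingHom.fst RX RY)

/-- `M` as a right module over `S = R_X × R_Y`, acting through `R_Y`. -/
noncomputable local instance moduleProdRight : Module (RX × RY)ᵐᵒᵖ M :=
  Module.compHom M (RingHom.op (RingHom.snd RX RY))

local instance : SMulCommClass (RX × RY) (RX × RY)ᵐᵒᵖ M :=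
  ⟨fun a b m => smul_comm a.1 (MulOpposite.op b.unop.2) m⟩

/-- The triangular matrix ring `R = (R_Y 0; M R_X)` of `S = R_X ⊕ R_Y` with the
`R_X`-`R_Y`-bimodule `M`: as an additive group it is `(R_X × R_Y) × M`, with
multiplication `(s, m)(s', m') = (s s', s m' + m s')` where `S` acts on `M` on the left
through `R_X` and on the right through `R_Y`. -/
noncomputable abbrev TriangularRing : Type u := TrivSqZeroExt (RX × RY) M

/-- A triple `(X, Y, f)` where `X` is an `R_X`-module, `Y` an `R_Y`-module and
`f : M ⊗_{R_Y} Y → X` a morphism of `R_X`-modules; the tensor product over the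
(possibly noncommutative) ring `R_Y` is encoded by its universal property: `f` is
given by a map `b : M → Y → X`, additive in each variable, `R_X`-linear in the first
variable, and `R_Y`-balanced. -/
structure TripleObj : Type (u + 1) where
  X : ModuleCat.{u} RX
  Y : ModuleCat.{u} RY
  b : M →+ (↥Y →+ ↥X)
  smul_fst : ∀ (r : RX) (m : M) (y : Y), b (r • m) y = r • b m y
  balanced : ∀ (m : M) (s : RY) (y : Y), b (MulOpposite.op s • m) y = b m (s • y)

variable {RX RY M}

/-- A morphism of triples `(X, Y, f) ⟶ (X', Y', f')`: a pair `(u, v)` making the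
obvious square commute. -/
@[ext] structure TripleHom (P Q : TripleObj RX RY M) where
  u : P.X ⟶ Q.X
  v : P.Y ⟶ Q.Y
  compat : ∀ (m : M) (y : P.Y), u (P.b m y) = Q.b m (v y)

instance : Category (TripleObj RX RY M) where
  Hom := TripleHom
  id P := ⟨𝟙 P.X, 𝟙 P.Y, fun m y => rfl⟩
  comp f g := ⟨f.u ≫ g.u, f.v ≫ g.v, fun m y => by
    simp only [ConcreteCategory.comp_apply, f.compat, g.compat]⟩
  id_comp f := TripleHom.ext (by simp) (by simp)
  comp_id f := TripleHom.ext (by simp) (by simp)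
  assoc f g h := TripleHom.ext (by simp) (by simp)

section AuxModule

variable (P : TripleObj RX RY M)

noncomputable instance tripleModule : Module (TriangularRing RX RY M) (↥P.X × ↥P.Y) where
  smul r xy := (r.fst.1 • xy.1 + P.b r.snd xy.2, r.fst.2 • xy.2)
  one_smul xy := by
    show (_ • _ + P.b (0 : M) _, _) = _
    simp [TrivSqZeroExt.fst_one]
  mul_smul r r' xy := by
    show (((r.fst).1 * (r'.fst).1) • xy.1
          + P.b ((r.fst : RX × RY) • r'.snd + MulOpposite.op (r'.fst : RX × RY) • r.snd) xy.2,
        ((r.fst).2 * (r'.fst).2) • xy.2)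
      = ((r.fst).1 • ((r'.fst).1 • xy.1 + P.b r'.snd xy.2) + P.b r.snd ((r'.fst).2 • xy.2),
        (r.fst).2 • (r'.fst).2 • xy.2)
    have h1 : ((r.fst : RX × RY) • r'.snd : M) = (r.fst).1 • r'.snd := rfl
    have h2 : (MulOpposite.op (r'.fst : RX × RY) • r.snd : M)
        = MulOpposite.op (r'.fst).2 • r.snd := rfl
    rw [h1, h2, map_add, AddMonoidHom.add_apply, P.smul_fst, P.balanced]
    refine Prod.ext ?_ ?_ <;> dsimp only
    · rw [mul_smul, smul_add, add_assoc]
    · rw [mul_smul]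
  smul_zero r := by
    show (r.fst.1 • (0 : ↥P.X) + P.b r.snd (0 : ↥P.Y), r.fst.2 • (0 : ↥P.Y)) = _
    simp
  smul_add r xy xy' := by
    show ((r.fst).1 • (xy.1 + xy'.1) + P.b r.snd (xy.2 + xy'.2), (r.fst).2 • (xy.2 + xy'.2))
      = ((r.fst).1 • xy.1 + P.b r.snd xy.2, (r.fst).2 • xy.2)
        + ((r.fst).1 • xy'.1 + P.b r.snd xy'.2, (r.fst).2 • xy'.2)
    refine Prod.ext ?_ ?_ <;> dsimp only [Prod.fst_add, Prod.snd_add]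
    · rw [smul_add, map_add]; abel
    · rw [smul_add]
  add_smul r r' xy := by
    show (((r.fst).1 + (r'.fst).1) • xy.1 + P.b (r.snd + r'.snd) xy.2,
        ((r.fst).2 + (r'.fst).2) • xy.2)
      = ((r.fst).1 • xy.1 + P.b r.snd xy.2, (r.fst).2 • xy.2)
        + ((r'.fst).1 • xy.1 + P.b r'.snd xy.2, (r'.fst).2 • xy.2)
    refine Prod.ext ?_ ?_ <;> dsimp only [Prod.fst_add, Prod.snd_add]
    · rw [add_smul, map_add, AddMonoidHom.add_apply]; abel
    · rw [add_smul]
  zero_smul xy := by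
    show ((0 : RX) • xy.1 + P.b (0 : M) xy.2, (0 : RY) • xy.2) = _
    simp

lemma triple_smul_def (r : TriangularRing RX RY M) (xy : ↥P.X × ↥P.Y) :
    r • xy = (r.fst.1 • xy.1 + P.b r.snd xy.2, r.fst.2 • xy.2) := rfl

end AuxModule

/-- The functor from triples to modules over the triangular ring. -/
noncomputable def toMod : TripleObj RX RY M ⥤ ModuleCat.{u} (TriangularRing RX RY M) where
  obj P := ModuleCat.of _ (↥P.X × ↥P.Y)
  map {P Q} f := ModuleCat.ofHom
    { toFun := fun xy => (f.u xy.1, f.v xy.2)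
      map_add' := fun a b => by ext <;> simp
      map_smul' := fun r xy => by
        refine Prod.ext ?_ ?_
        · show f.u (r.fst.1 • xy.1 + P.b r.snd xy.2) = r.fst.1 • f.u xy.1 + Q.b r.snd (f.v xy.2)
          rw [map_add, map_smul, f.compat]
        · show f.v (r.fst.2 • xy.2) = r.fst.2 • f.v xy.2
          rw [map_smul] }
  map_id P := rfl
  map_comp f g := rfl

section SmulLemmas

lemma inlX_smul (P : TripleObj RX RY M) (r : RX) (xy : ↥P.X × ↥P.Y) :
    (TrivSqZeroExt.inl ((r : RX), (0 : RY)) : TriangularRing RX RY M) • xy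
      = (r • xy.1, (0 : ↥P.Y)) := by
  rw [triple_smul_def]
  simp [TrivSqZeroExt.fst_inl, TrivSqZeroExt.snd_inl]

lemma inlY_smul (P : TripleObj RX RY M) (s : RY) (xy : ↥P.X × ↥P.Y) :
    (TrivSqZeroExt.inl ((0 : RX), (s : RY)) : TriangularRing RX RY M) • xy
      = ((0 : ↥P.X), s • xy.2) := by
  rw [triple_smul_def]
  simp [TrivSqZeroExt.fst_inl, TrivSqZeroExt.snd_inl]

lemma inr_smul (P : TripleObj RX RY M) (m : M) (xy : ↥P.X × ↥P.Y) :
    (TrivSqZeroExt.inr m : TriangularRing RX RY M) • xy = (P.b m xy.2, (0 : ↥P.Y)) := by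
  rw [triple_smul_def]
  simp [TrivSqZeroExt.fst_inr, TrivSqZeroExt.snd_inr]

end SmulLemmas

noncomputable instance : (toMod (RX := RX) (RY := RY) (M := M)).Faithful where
  map_injective {P Q} f g h := by
    refine TripleHom.ext ?_ ?_
    · refine ModuleCat.hom_ext (LinearMap.ext fun x => ?_)
      have := congrArg (fun φ => ModuleCat.Hom.hom φ ((x, 0) : ↥P.X × ↥P.Y)) h
      exact congrArg Prod.fst this
    · refine ModuleCat.hom_ext (LinearMap.ext fun y => ?_)
      have := congrArg (fun φ => ModuleCat.Hom.hom φ ((0, y) : ↥P.X × ↥P.Y)) h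
      exact congrArg Prod.snd this

noncomputable instance : (toMod (RX := RX) (RY := RY) (M := M)).Full where
  map_surjective {P Q} g := by
    change ModuleCat.of _ (↥P.X × ↥P.Y) ⟶ ModuleCat.of _ (↥Q.X × ↥Q.Y) at g
    have hg : ∀ xy : ↥P.X × ↥P.Y,
        ∀ r : TriangularRing RX RY M, g (r • xy) = r • g xy := fun xy r => map_smul g.hom r xy
    -- second component of g (x, 0) is zero
    have hx0 : ∀ x : ↥P.X, g ((x, 0) : ↥P.X × ↥P.Y) = ((g ((x, 0) : ↥P.X × ↥P.Y)).1, 0) := by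
      intro x
      have h1 : (TrivSqZeroExt.inl ((1 : RX), (0 : RY)) : TriangularRing RX RY M)
          • ((x, 0) : ↥P.X × ↥P.Y) = ((x, 0) : ↥P.X × ↥P.Y) := by
        rw [inlX_smul, one_smul]
      have := (hg _ _).symm.trans (congrArg g h1)
      rw [inlX_smul, one_smul] at this
      exact this.symm ▸ (by rw [← this])
    have hy0 : ∀ y : ↥P.Y, g ((0, y) : ↥P.X × ↥P.Y) = (0, (g ((0, y) : ↥P.X × ↥P.Y)).2) := by
      intro y
      have h1 : (TrivSqZeroExt.inl ((0 : RX), (1 : RY)) : TriangularRing RX RY M)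
          • ((0, y) : ↥P.X × ↥P.Y) = ((0, y) : ↥P.X × ↥P.Y) := by
        rw [inlY_smul, one_smul]
      have := (hg _ _).symm.trans (congrArg g h1)
      rw [inlY_smul, one_smul] at this
      exact this.symm ▸ (by rw [← this])
    refine ⟨⟨ModuleCat.ofHom
             { toFun := fun x => (g ((x, 0) : ↥P.X × ↥P.Y)).1
               map_add' := fun a b => by
                 show (g ((a + b, 0) : ↥P.X × ↥P.Y)).1
                   = (g ((a, 0) : ↥P.X × ↥P.Y)).1 + (g ((b, 0) : ↥P.X × ↥P.Y)).1
                 have : ((a + b, 0) : ↥P.X × ↥P.Y) = (a, 0) + (b, 0) := by simp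
                 rw [this, map_add]; rfl
               map_smul' := fun r x => by
                 show (g ((r • x, 0) : ↥P.X × ↥P.Y)).1 = r • (g ((x, 0) : ↥P.X × ↥P.Y)).1
                 have : ((r • x, 0) : ↥P.X × ↥P.Y)
                     = (TrivSqZeroExt.inl ((r : RX), (0 : RY)) : TriangularRing RX RY M)
                        • ((x, 0) : ↥P.X × ↥P.Y) := by rw [inlX_smul]
                 rw [this, hg, inlX_smul]},
             ModuleCat.ofHom
             { toFun := fun y => (g ((0, y) : ↥P.X × ↥P.Y)).2
               map_add' := fun a b => by
                 show (g ((0, a + b) : ↥P.X × ↥P.Y)).2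
                   = (g ((0, a) : ↥P.X × ↥P.Y)).2 + (g ((0, b) : ↥P.X × ↥P.Y)).2
                 have : ((0, a + b) : ↥P.X × ↥P.Y) = (0, a) + (0, b) := by simp
                 rw [this, map_add]; rfl
               map_smul' := fun s y => by
                 show (g ((0, s • y) : ↥P.X × ↥P.Y)).2 = s • (g ((0, y) : ↥P.X × ↥P.Y)).2
                 have : ((0, s • y) : ↥P.X × ↥P.Y)
                     = (TrivSqZeroExt.inl ((0 : RX), (s : RY)) : TriangularRing RX RY M)
                        • ((0, y) : ↥P.X × ↥P.Y) := by rw [inlY_smul]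
                 rw [this, hg, inlY_smul]},
             fun m y => ?_⟩, ?_⟩
    · show (g ((P.b m y, 0) : ↥P.X × ↥P.Y)).1 = Q.b m (g ((0, y) : ↥P.X × ↥P.Y)).2
      have h1 : ((P.b m y, 0) : ↥P.X × ↥P.Y)
          = (TrivSqZeroExt.inr m : TriangularRing RX RY M) • ((0, y) : ↥P.X × ↥P.Y) := by
        rw [inr_smul]
      rw [h1, hg, inr_smul]
    · refine ModuleCat.hom_ext (LinearMap.ext fun (xy : ↥P.X × ↥P.Y) => ?_)
      show ((g ((xy.1, 0) : ↥P.X × ↥P.Y)).1, (g ((0, xy.2) : ↥P.X × ↥P.Y)).2) = g xy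
      have hxy : xy = ((xy.1, 0) : ↥P.X × ↥P.Y) + (0, xy.2) := by
        show xy = ((xy.1 + 0, 0 + xy.2) : ↥P.X × ↥P.Y)
        rw [add_zero, zero_add]
      conv_rhs => rw [hxy]
      rw [map_add, hx0 xy.1, hy0 xy.2]
      show _ = (((g ((xy.1, 0) : ↥P.X × ↥P.Y)).1 + 0,
        0 + (g ((0, xy.2) : ↥P.X × ↥P.Y)).2) : ↥Q.X × ↥Q.Y)
      rw [add_zero, zero_add]

section EssSurjSide

variable (N : ModuleCat.{u} (TriangularRing RX RY M))

lemma mul_eltX (r : TriangularRing RX RY M) :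
    r * TrivSqZeroExt.inl ((1 : RX), (0 : RY))
      = TrivSqZeroExt.inl ((r.fst.1 : RX), (0 : RY)) := by
  refine TrivSqZeroExt.ext ?_ ?_
  · rw [TrivSqZeroExt.fst_mul, TrivSqZeroExt.fst_inl, TrivSqZeroExt.fst_inl]
    exact Prod.ext (mul_one _) (mul_zero _)
  · rw [TrivSqZeroExt.snd_mul, TrivSqZeroExt.snd_inl, TrivSqZeroExt.snd_inl, smul_zero, zero_add]
    show MulOpposite.op ((0 : RY)) • r.snd = 0
    rw [MulOpposite.op_zero, zero_smul]

lemma mul_eltY (r : TriangularRing RX RY M) :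
    r * TrivSqZeroExt.inl ((0 : RX), (1 : RY))
      = TrivSqZeroExt.inl ((0 : RX), (r.fst.2 : RY)) + TrivSqZeroExt.inr r.snd := by
  refine TrivSqZeroExt.ext ?_ ?_
  · rw [TrivSqZeroExt.fst_mul, TrivSqZeroExt.fst_inl, TrivSqZeroExt.fst_add,
      TrivSqZeroExt.fst_inl, TrivSqZeroExt.fst_inr, add_zero]
    exact Prod.ext (mul_zero _) (mul_one _)
  · rw [TrivSqZeroExt.snd_mul, TrivSqZeroExt.snd_inl, smul_zero, zero_add,
      TrivSqZeroExt.snd_add, TrivSqZeroExt.snd_inl, TrivSqZeroExt.snd_inr, zero_add]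
    show MulOpposite.op ((1 : RY)) • r.snd = r.snd
    rw [MulOpposite.op_one, one_smul]

lemma eltX_mul_inlX (r : RX) :
    (TrivSqZeroExt.inl ((1 : RX), (0 : RY)) : TriangularRing RX RY M)
      * TrivSqZeroExt.inl ((r : RX), (0 : RY)) = TrivSqZeroExt.inl ((r : RX), (0 : RY)) := by
  rw [TrivSqZeroExt.inl_mul_inl]
  congr 1
  exact Prod.ext (one_mul _) (mul_zero _)

lemma eltY_mul_inlY (s : RY) :
    (TrivSqZeroExt.inl ((0 : RX), (1 : RY)) : TriangularRing RX RY M)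
      * TrivSqZeroExt.inl ((0 : RX), (s : RY)) = TrivSqZeroExt.inl ((0 : RX), (s : RY)) := by
  rw [TrivSqZeroExt.inl_mul_inl]
  congr 1
  exact Prod.ext (mul_zero _) (one_mul _)

lemma eltX_mul_inr (m : M) :
    (TrivSqZeroExt.inl ((1 : RX), (0 : RY)) : TriangularRing RX RY M)
      * TrivSqZeroExt.inr m = TrivSqZeroExt.inr m := by
  rw [TrivSqZeroExt.inl_mul_inr]
  congr 1
  exact one_smul RX m

/-- The "X part" of a module over the triangular ring. -/
noncomputable def subX : AddSubgroup N where
  carrier := {n | (TrivSqZeroExt.inl ((1 : RX), (0 : RY)) : TriangularRing RX RY M) • n = n}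
  add_mem' {a b} ha hb := by
    show _ • (a + b) = a + b
    rw [smul_add]
    rw [Set.mem_setOf_eq] at ha hb
    rw [ha, hb]
  zero_mem' := smul_zero _
  neg_mem' {a} ha := by
    show _ • (-a) = -a
    rw [Set.mem_setOf_eq] at ha
    rw [smul_neg, ha]

/-- The "Y part" of a module over the triangular ring. -/
noncomputable def subY : AddSubgroup N where
  carrier := {n | (TrivSqZeroExt.inl ((0 : RX), (1 : RY)) : TriangularRing RX RY M) • n = n}
  add_mem' {a b} ha hb := by
    show _ • (a + b) = a + b
    rw [smul_add]
    rw [Set.mem_setOf_eq] at ha hb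
    rw [ha, hb]
  zero_mem' := smul_zero _
  neg_mem' {a} ha := by
    show _ • (-a) = -a
    rw [Set.mem_setOf_eq] at ha
    rw [smul_neg, ha]

lemma subX_mem_iff {n : N} :
    n ∈ subX N ↔ (TrivSqZeroExt.inl ((1 : RX), (0 : RY)) : TriangularRing RX RY M) • n = n :=
  Iff.rfl

lemma subY_mem_iff {n : N} :
    n ∈ subY N ↔ (TrivSqZeroExt.inl ((0 : RX), (1 : RY)) : TriangularRing RX RY M) • n = n :=
  Iff.rfl

noncomputable instance subXModule : Module RX ↥(subX N) where
  smul r n := ⟨(TrivSqZeroExt.inl ((r : RX), (0 : RY)) : TriangularRing RX RY M) • (n : N), by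
    rw [subX_mem_iff, smul_smul, eltX_mul_inlX]⟩
  one_smul n := Subtype.ext (by
    show (TrivSqZeroExt.inl ((1 : RX), (0 : RY)) : TriangularRing RX RY M) • (n : N) = n
    exact n.2)
  mul_smul r r' n := Subtype.ext (by
    show (TrivSqZeroExt.inl ((r * r' : RX), (0 : RY)) : TriangularRing RX RY M) • (n : N)
      = TrivSqZeroExt.inl ((r : RX), (0 : RY))
        • (TrivSqZeroExt.inl ((r' : RX), (0 : RY)) : TriangularRing RX RY M) • (n : N)
    rw [smul_smul, TrivSqZeroExt.inl_mul_inl, Prod.mk_mul_mk, mul_zero])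
  smul_zero r := Subtype.ext (smul_zero _)
  smul_add r a b := Subtype.ext (smul_add _ (a : N) (b : N))
  add_smul r r' n := Subtype.ext (by
    show (TrivSqZeroExt.inl ((r + r' : RX), (0 : RY)) : TriangularRing RX RY M) • (n : N)
      = TrivSqZeroExt.inl ((r : RX), (0 : RY)) • (n : N)
        + TrivSqZeroExt.inl ((r' : RX), (0 : RY)) • (n : N)
    have : (TrivSqZeroExt.inl ((r + r' : RX), (0 : RY)) : TriangularRing RX RY M)
        = TrivSqZeroExt.inl ((r : RX), (0 : RY)) + TrivSqZeroExt.inl ((r' : RX), (0 : RY)) := by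
      rw [← TrivSqZeroExt.inl_add, Prod.mk_add_mk, add_zero]
    rw [this, add_smul])
  zero_smul n := Subtype.ext (by
    show (TrivSqZeroExt.inl ((0 : RX), (0 : RY)) : TriangularRing RX RY M) • (n : N) = 0
    have h0 : ((0 : RX), (0 : RY)) = (0 : RX × RY) := rfl
    rw [h0, TrivSqZeroExt.inl_zero, zero_smul])

noncomputable instance subYModule : Module RY ↥(subY N) where
  smul s n := ⟨(TrivSqZeroExt.inl ((0 : RX), (s : RY)) : TriangularRing RX RY M) • (n : N), by
    rw [subY_mem_iff, smul_smul, eltY_mul_inlY]⟩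
  one_smul n := Subtype.ext (by
    show (TrivSqZeroExt.inl ((0 : RX), (1 : RY)) : TriangularRing RX RY M) • (n : N) = n
    exact n.2)
  mul_smul s s' n := Subtype.ext (by
    show (TrivSqZeroExt.inl ((0 : RX), (s * s' : RY)) : TriangularRing RX RY M) • (n : N)
      = TrivSqZeroExt.inl ((0 : RX), (s : RY))
        • (TrivSqZeroExt.inl ((0 : RX), (s' : RY)) : TriangularRing RX RY M) • (n : N)
    rw [smul_smul, TrivSqZeroExt.inl_mul_inl, Prod.mk_mul_mk, mul_zero])
  smul_zero s := Subtype.ext (smul_zero _)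
  smul_add s a b := Subtype.ext (smul_add _ (a : N) (b : N))
  add_smul s s' n := Subtype.ext (by
    show (TrivSqZeroExt.inl ((0 : RX), (s + s' : RY)) : TriangularRing RX RY M) • (n : N)
      = TrivSqZeroExt.inl ((0 : RX), (s : RY)) • (n : N)
        + TrivSqZeroExt.inl ((0 : RX), (s' : RY)) • (n : N)
    have : (TrivSqZeroExt.inl ((0 : RX), (s + s' : RY)) : TriangularRing RX RY M)
        = TrivSqZeroExt.inl ((0 : RX), (s : RY)) + TrivSqZeroExt.inl ((0 : RX), (s' : RY)) := by
      rw [← TrivSqZeroExt.inl_add, Prod.mk_add_mk, add_zero]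
    rw [this, add_smul])
  zero_smul n := Subtype.ext (by
    show (TrivSqZeroExt.inl ((0 : RX), (0 : RY)) : TriangularRing RX RY M) • (n : N) = 0
    have h0 : ((0 : RX), (0 : RY)) = (0 : RX × RY) := rfl
    rw [h0, TrivSqZeroExt.inl_zero, zero_smul])

/-- The bilinear-type map of the triple associated with a module. -/
noncomputable def bOf : M →+ (↥(subY N) →+ ↥(subX N)) :=
  AddMonoidHom.mk' (fun m => AddMonoidHom.mk'
    (fun (y : ↥(subY N)) => (⟨(TrivSqZeroExt.inr m : TriangularRing RX RY M) • (y : N), by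
      rw [subX_mem_iff, smul_smul, eltX_mul_inr]⟩ : ↥(subX N)))
    (fun a b => Subtype.ext (smul_add _ (a : N) (b : N))))
    (fun m m' => by
      refine AddMonoidHom.ext fun y => Subtype.ext ?_
      show (TrivSqZeroExt.inr (m + m') : TriangularRing RX RY M) • (y : N)
        = TrivSqZeroExt.inr m • (y : N) + TrivSqZeroExt.inr m' • (y : N)
      rw [TrivSqZeroExt.inr_add, add_smul])

lemma bOf_val (m : M) (y : ↥(subY N)) :
    ((bOf N m y : ↥(subX N)) : N) = (TrivSqZeroExt.inr m : TriangularRing RX RY M) • (y : N) :=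
  rfl

lemma bOf_smul_fst (r : RX) (m : M) (y : ↥(subY N)) :
    bOf N (r • m) y = r • bOf N m y := Subtype.ext (by
  show (TrivSqZeroExt.inr (r • m) : TriangularRing RX RY M) • (y : N)
    = TrivSqZeroExt.inl ((r : RX), (0 : RY))
      • (TrivSqZeroExt.inr m : TriangularRing RX RY M) • (y : N)
  rw [smul_smul, TrivSqZeroExt.inl_mul_inr]
  rfl)

lemma bOf_balanced (m : M) (s : RY) (y : ↥(subY N)) :
    bOf N (MulOpposite.op s • m) y = bOf N m (s • y) := Subtype.ext (by
  show (TrivSqZeroExt.inr (MulOpposite.op s • m) : TriangularRing RX RY M) • (y : N)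
    = TrivSqZeroExt.inr m
      • (TrivSqZeroExt.inl ((0 : RX), (s : RY)) : TriangularRing RX RY M) • (y : N)
  rw [smul_smul, TrivSqZeroExt.inr_mul_inl]
  rfl)

/-- The triple associated with a module over the triangular ring. -/
noncomputable def tripleOf : TripleObj RX RY M where
  X := ModuleCat.of RX ↥(subX N)
  Y := ModuleCat.of RY ↥(subY N)
  b := bOf N
  smul_fst r m y := bOf_smul_fst N r m y
  balanced m s y := bOf_balanced N m s y

/-- The canonical equivalence between a module over the triangular ring and the module
associated with its triple. -/
noncomputable def tripleOfEquiv :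
    (↥(tripleOf N).X × ↥(tripleOf N).Y) ≃ₗ[TriangularRing RX RY M] N where
  toFun xy := Subtype.val xy.1 + Subtype.val xy.2
  map_add' a b := by
    show (Subtype.val a.1 + Subtype.val b.1) + (Subtype.val a.2 + Subtype.val b.2) = _
    abel
  map_smul' r xy := by
    show (TrivSqZeroExt.inl ((r.fst.1 : RX), (0 : RY)) • Subtype.val xy.1
          + (TrivSqZeroExt.inr r.snd : TriangularRing RX RY M) • Subtype.val xy.2)
        + TrivSqZeroExt.inl ((0 : RX), (r.fst.2 : RY)) • Subtype.val xy.2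
      = r • (Subtype.val xy.1 + Subtype.val xy.2)
    have hx : Subtype.val xy.1
        = (TrivSqZeroExt.inl ((1 : RX), (0 : RY)) : TriangularRing RX RY M)
          • Subtype.val xy.1 := ((subX_mem_iff N).mp (Subtype.prop xy.1)).symm
    have hy : Subtype.val xy.2
        = (TrivSqZeroExt.inl ((0 : RX), (1 : RY)) : TriangularRing RX RY M)
          • Subtype.val xy.2 := ((subY_mem_iff N).mp (Subtype.prop xy.2)).symm
    rw [smul_add]
    conv_rhs => rw [hx, hy]
    rw [smul_smul, smul_smul, mul_eltX, mul_eltY, add_smul]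
    abel
  invFun n :=
    (⟨(TrivSqZeroExt.inl ((1 : RX), (0 : RY)) : TriangularRing RX RY M) • n, by
        rw [subX_mem_iff, smul_smul, eltX_mul_inlX]⟩,
     ⟨(TrivSqZeroExt.inl ((0 : RX), (1 : RY)) : TriangularRing RX RY M) • n, by
        rw [subY_mem_iff, smul_smul, eltY_mul_inlY]⟩)
  left_inv xy := by
    have hXY : (TrivSqZeroExt.inl ((1 : RX), (0 : RY)) : TriangularRing RX RY M)
        * TrivSqZeroExt.inl ((0 : RX), (1 : RY)) = 0 := by
      rw [TrivSqZeroExt.inl_mul_inl, Prod.mk_mul_mk, mul_zero, zero_mul]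
      exact TrivSqZeroExt.inl_zero _
    have hYX : (TrivSqZeroExt.inl ((0 : RX), (1 : RY)) : TriangularRing RX RY M)
        * TrivSqZeroExt.inl ((1 : RX), (0 : RY)) = 0 := by
      rw [TrivSqZeroExt.inl_mul_inl, Prod.mk_mul_mk, mul_zero, zero_mul]
      exact TrivSqZeroExt.inl_zero _
    have hx := (subX_mem_iff N).mp (Subtype.prop xy.1)
    have hy := (subY_mem_iff N).mp (Subtype.prop xy.2)
    refine Prod.ext (Subtype.ext ?_) (Subtype.ext ?_)
    · show (TrivSqZeroExt.inl ((1 : RX), (0 : RY)) : TriangularRing RX RY M)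
        • (Subtype.val xy.1 + Subtype.val xy.2) = Subtype.val xy.1
      rw [smul_add, hx]
      conv_lhs => rw [← hy]
      rw [smul_smul, hXY, zero_smul, add_zero]
    · show (TrivSqZeroExt.inl ((0 : RX), (1 : RY)) : TriangularRing RX RY M)
        • (Subtype.val xy.1 + Subtype.val xy.2) = Subtype.val xy.2
      rw [smul_add, hy]
      conv_lhs => rw [← hx]
      rw [smul_smul, hYX, zero_smul, zero_add]
  right_inv n := by
    show (TrivSqZeroExt.inl ((1 : RX), (0 : RY)) : TriangularRing RX RY M) • n
      + (TrivSqZeroExt.inl ((0 : RX), (1 : RY)) : TriangularRing RX RY M) • n = n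
    rw [← add_smul, ← TrivSqZeroExt.inl_add]
    have : (((1 : RX), (0 : RY)) : RX × RY) + ((0 : RX), (1 : RY)) = 1 :=
      Prod.ext (add_zero _) (zero_add _)
    rw [this, TrivSqZeroExt.inl_one, one_smul]

noncomputable instance : (toMod (RX := RX) (RY := RY) (M := M)).EssSurj where
  mem_essImage N := ⟨tripleOf N, ⟨(tripleOfEquiv N).toModuleIso⟩⟩

end EssSurjSide


/-- The category of all left modules over the triangular matrix ring
`R = (R_Y 0; M R_X)` is equivalent to the category of triples `(X, Y, f)` with `X` an
`R_X`-module, `Y` an `R_Y`-module, and `f : M ⊗_{R_Y} Y → X` a morphism of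
`R_X`-modules. -/
theorem triangular_matrix_ring_modules_equiv_triples :
    Nonempty (ModuleCat.{u} (TriangularRing RX RY M) ≌ TripleObj RX RY M) := by
  haveI : (toMod (RX := RX) (RY := RY) (M := M)).IsEquivalence := {}
  exact ⟨(toMod (RX := RX) (RY := RY) (M := M)).asEquivalence.symm⟩
end
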